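/- Fix an integer N ≥ 1, a real ρ > 0, and strictly increasing real N-tuples 𝐦 = (m₀ < ⋯ < m_{N−1}) and 𝐧 = (n₀ < ⋯ < n_{N−1}) with m_j ≤ n_j for all j. Then for every u ∈ (0, √ρ]^N with pairwise distinct entries, det(u^{∘𝐧})/det(u^{∘𝐦}) ≤ ρ^{(|𝐧| − |𝐦|)/2} · V(𝐧)/V(𝐦), where |𝐧| := n₀ + ⋯ + n_{N−1} and |𝐦| := m₀ + ⋯ + m_{N−1}. -/

import Mathlib

open Matrix BigOperators Finset MeasureTheory

/-- The Vandermonde-type product V(m) = ∏_{k<l} (m_l - m_k). -/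
noncomputable def Vdm (N : ℕ) (m : Fin N → ℝ) : ℝ :=
  ∏ p ∈ Finset.univ.filter (fun p : Fin N × Fin N => p.1 < p.2), (m p.2 - m p.1)

lemma Vdm_eq (N : ℕ) (m : Fin N → ℝ) :
    Vdm N m = ∏ i : Fin N, ∏ j ∈ Finset.Ioi i, (m j - m i) := by
  rw [Vdm, Finset.prod_sigma']
  exact Finset.prod_nbij' (fun p => ⟨p.1, p.2⟩) (fun p => (p.1, p.2))
    (by simp [Finset.mem_Ioi]) (by simp [Finset.mem_Ioi]) (by simp) (by simp) (by simp)

lemma Vdm_pos {N : ℕ} {m : Fin N → ℝ} (hm : StrictMono m) : 0 < Vdm N m := by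
  rw [Vdm_eq]
  exact Finset.prod_pos fun i _ => Finset.prod_pos fun j hj =>
    sub_pos.2 (hm (Finset.mem_Ioi.1 hj))

lemma Vdm_succ (N : ℕ) (a : Fin (N+1) → ℝ) :
    Vdm (N+1) a = (∏ j : Fin N, (a j.succ - a 0)) * Vdm N (fun j => a j.succ) := by
  simp_rw [Vdm_eq, Fin.prod_univ_succ, Fin.prod_Ioi_zero, Fin.prod_Ioi_succ]

-- row differencing lemma
lemma det_rowdiff {N : ℕ} (B : Matrix (Fin (N+1)) (Fin (N+1)) ℝ) (hB : ∀ i, B i 0 = 1) :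
    det B = det (Matrix.of fun (i j : Fin N) => B i.succ j.succ - B i.castSucc j.succ) := by
  classical
  set L : Matrix (Fin (N+1)) (Fin (N+1)) ℝ :=
    Matrix.of fun i k => (if i = k then (1:ℝ) else 0) - (if (k:ℕ)+1 = (i:ℕ) then 1 else 0) with hL
  have hLB : ∀ i j, (L * B) i j =
      Fin.cases (B 0 j) (fun i' => B i'.succ j - B i'.castSucc j) i := by
    intro i j
    rw [Matrix.mul_apply]
    simp only [hL, Matrix.of_apply, sub_mul, ite_mul, one_mul, zero_mul]
    rw [Finset.sum_sub_distrib, Finset.sum_ite_eq (Finset.univ : Finset (Fin (N+1))) i (fun k => B k j)]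
    induction i using Fin.cases with
    | zero =>
      simp only [Fin.cases_zero, Finset.mem_univ, if_true]
      have : ∀ k : Fin (N+1), ¬ ((k:ℕ)+1 = ((0 : Fin (N+1)):ℕ)) := by simp
      rw [Finset.sum_congr rfl (fun k _ => if_neg (this k)), Finset.sum_const_zero]
      ring
    | succ i' =>
      simp only [Fin.cases_succ, Finset.mem_univ, if_true]
      have : (Finset.univ.sum fun k : Fin (N+1) => if (k:ℕ)+1 = ((i'.succ : Fin (N+1)):ℕ) then B k j else 0)
          = B i'.castSucc j := by
        rw [Finset.sum_eq_single i'.castSucc]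
        · simp
        · intro k _ hk
          apply if_neg
          intro h
          apply hk
          have : (k:ℕ) = (i'.castSucc : ℕ) := by
            simp only [Fin.val_succ, Fin.coe_castSucc] at h ⊢; omega
          exact Fin.ext this
        · simp
      rw [this]
  have hdetL : det L = 1 := by
    have : L.BlockTriangular OrderDual.toDual := by
      intro i k hik
      have hik' : i < k := hik
      simp only [hL, Matrix.of_apply]
      rw [if_neg (ne_of_lt hik'), if_neg (by have := Fin.lt_iff_val_lt_val.1 hik'; omega)]
      ring
    rw [Matrix.det_of_lowerTriangular L this]
    simp [hL, Finset.prod_ite_eq]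
  have h1 : det (L * B) = det B := by rw [Matrix.det_mul, hdetL, one_mul]
  rw [← h1]
  -- now expand along column 0
  have hcol : ∀ i, (L * B) i 0 = (if i = 0 then (1:ℝ) else 0) := by
    intro i
    rw [hLB]
    induction i using Fin.cases with
    | zero => simp [hB]
    | succ i' => simp [hB, Fin.succ_ne_zero]
  rw [Matrix.det_succ_column_zero]
  rw [Finset.sum_eq_single 0]
  · rw [hcol 0, if_pos rfl]
    simp only [Fin.val_zero, pow_zero, one_mul, mul_one]
    congr 1
    ext i j
    rw [Matrix.submatrix_apply, hLB]
    simp [Fin.succAbove]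
  · intro k _ hk
    rw [hcol k, if_neg hk]
    ring
  · simp

lemma box_indicator_prod {N : ℕ} (S : Fin N → Set ℝ) (f : Fin N → ℝ → ℝ) (t : Fin N → ℝ) :
    (Set.univ.pi S).indicator (fun t : Fin N → ℝ => ∏ i, f i (t i)) t
      = ∏ i, (S i).indicator (f i) (t i) := by
  by_cases ht : t ∈ Set.univ.pi S
  · rw [Set.indicator_of_mem ht]
    exact Finset.prod_congr rfl fun i _ =>
      (Set.indicator_of_mem (ht i (Set.mem_univ i)) (f i)).symm
  · rw [Set.indicator_of_notMem ht]
    have : ∃ i, t i ∉ S i := by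
      by_contra h
      push_neg at h
      exact ht (fun i _ => h i)
    obtain ⟨i, hi⟩ := this
    rw [eq_comm]
    apply Finset.prod_eq_zero (Finset.mem_univ i)
    exact Set.indicator_of_notMem hi (f i)

lemma box_prod_integral {N : ℕ} (c d : Fin N → ℝ) (f : Fin N → ℝ → ℝ) :
    ∫ t in Set.univ.pi (fun i => Set.Icc (c i) (d i)), ∏ i, f i (t i)
      = ∏ i, ∫ x in Set.Icc (c i) (d i), f i x := by
  have hbox : MeasurableSet (Set.univ.pi (fun i => Set.Icc (c i) (d i))) :=
    MeasurableSet.univ_pi (fun i => measurableSet_Icc)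
  rw [← integral_indicator hbox]
  have : (fun t : Fin N → ℝ =>
      (Set.univ.pi (fun i => Set.Icc (c i) (d i))).indicator
        (fun t : Fin N → ℝ => ∏ i, f i (t i)) t)
      = fun t => ∏ i, (Set.Icc (c i) (d i)).indicator (f i) (t i) := by
    funext t; exact box_indicator_prod _ _ _
  rw [this]
  rw [MeasureTheory.integral_fintype_prod_volume_eq_prod (ι := Fin N)
    (f := fun i => (Set.Icc (c i) (d i)).indicator (f i))]
  exact Finset.prod_congr rfl fun i _ => integral_indicator measurableSet_Icc

lemma det_box_integral {N : ℕ} (c d : Fin N → ℝ) (g : ℝ → Fin N → ℝ)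
    (hg : ∀ i j, IntegrableOn (fun x => g x j) (Set.Icc (c i) (d i))) :
    Matrix.det (Matrix.of fun i j => ∫ x in Set.Icc (c i) (d i), g x j)
      = ∫ t in Set.univ.pi (fun i => Set.Icc (c i) (d i)),
          Matrix.det (Matrix.of fun i j => g (t i) j) := by
  have hbox : MeasurableSet (Set.univ.pi (fun i => Set.Icc (c i) (d i))) :=
    MeasurableSet.univ_pi (fun i => measurableSet_Icc)
  have key : ∀ σ : Equiv.Perm (Fin N),
      IntegrableOn (fun t : Fin N → ℝ => ∏ i, g (t i) (σ⁻¹ i))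
        (Set.univ.pi (fun i => Set.Icc (c i) (d i))) := by
    intro σ
    refine (integrable_indicator_iff hbox).1 ?_
    have : (Set.univ.pi (fun i => Set.Icc (c i) (d i))).indicator
        (fun t : Fin N → ℝ => ∏ i, g (t i) (σ⁻¹ i))
        = fun t => ∏ i, (Set.Icc (c i) (d i)).indicator (fun x => g x (σ⁻¹ i)) (t i) := by
      funext t
      exact box_indicator_prod _ (fun i x => g x (σ⁻¹ i)) t
    rw [this]
    exact Integrable.fintype_prod fun i =>
      (integrable_indicator_iff measurableSet_Icc).2 (hg i (σ⁻¹ i))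
  have reperm : ∀ (σ : Equiv.Perm (Fin N)) (t : Fin N → ℝ),
      (∏ i, g (t (σ i)) i) = ∏ i, g (t i) (σ⁻¹ i) := by
    intro σ t
    calc (∏ i, g (t (σ i)) i) = ∏ i, g (t (σ (σ⁻¹ i))) (σ⁻¹ i) :=
          (Equiv.prod_comp σ⁻¹ (fun i => g (t (σ i)) i)).symm
    _ = ∏ i, g (t i) (σ⁻¹ i) := by
          exact Finset.prod_congr rfl fun i _ => by simp
  simp_rw [Matrix.det_apply', Matrix.of_apply]
  rw [MeasureTheory.integral_finset_sum]
  · refine Finset.sum_congr rfl fun σ _ => ?_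
    rw [MeasureTheory.integral_const_mul]
    congr 1
    have h2 : ∫ t in Set.univ.pi (fun i => Set.Icc (c i) (d i)), ∏ i, g (t (σ i)) i
        = ∏ i, ∫ x in Set.Icc (c i) (d i), g x (σ⁻¹ i) := by
      rw [show (fun t : Fin N → ℝ => ∏ i, g (t (σ i)) i)
          = fun t => ∏ i, g (t i) (σ⁻¹ i) from funext (reperm σ)]
      exact box_prod_integral c d (fun i x => g x (σ⁻¹ i))
    rw [h2]
    calc (∏ i, ∫ x in Set.Icc (c (σ i)) (d (σ i)), g x i)
        = ∏ i, ∫ x in Set.Icc (c (σ (σ⁻¹ i))) (d (σ (σ⁻¹ i))), g x (σ⁻¹ i) :=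
          (Equiv.prod_comp σ⁻¹ (fun i => ∫ x in Set.Icc (c (σ i)) (d (σ i)), g x i)).symm
    _ = ∏ i, ∫ x in Set.Icc (c i) (d i), g x (σ⁻¹ i) := by
          exact Finset.prod_congr rfl fun i _ => by simp
  · intro σ _
    have := (key σ).const_mul (Equiv.Perm.sign σ : ℝ)
    rw [show (fun t : Fin N → ℝ => (Equiv.Perm.sign σ : ℝ) * ∏ i, g (t i) (σ⁻¹ i))
        = fun t => (Equiv.Perm.sign σ : ℝ) * ∏ i, g (t (σ i)) i from
      funext fun t => by rw [reperm σ t]] at this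
    exact this

lemma master_id {N : ℕ} (u : Fin (N+1) → ℝ) (a : Fin (N+1) → ℝ)
    (hu : StrictMono u) (hu0 : 0 < u 0) (ha : StrictMono a) :
    Matrix.det (Matrix.of fun i j => u i ^ a j)
      = (∏ i, u i ^ a 0) * ((∏ j : Fin N, (a j.succ - a 0)) *
        ∫ t in Set.univ.pi (fun i : Fin N => Set.Icc (u i.castSucc) (u i.succ)),
          Matrix.det (Matrix.of fun (i j : Fin N) => (t i) ^ (a j.succ - a 0 - 1))) := by
  have hupos : ∀ i, 0 < u i := fun i => lt_of_lt_of_le hu0 (hu.monotone (Fin.zero_le i))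
  have h1 : Matrix.det (Matrix.of fun i j => u i ^ a j)
      = (∏ i, u i ^ a 0) * Matrix.det (Matrix.of fun i j => u i ^ (a j - a 0)) := by
    rw [← Matrix.det_mul_column (fun i => u i ^ a 0) (Matrix.of fun i j => u i ^ (a j - a 0))]
    congr 1
    ext i j
    simp only [Matrix.of_apply]
    rw [← Real.rpow_add (hupos i)]
    ring_nf
  rw [h1]
  congr 1
  have h2 : Matrix.det (Matrix.of fun i j => u i ^ (a j - a 0))
      = Matrix.det (Matrix.of fun (i j : Fin N) =>
          u i.succ ^ (a j.succ - a 0) - u i.castSucc ^ (a j.succ - a 0)) := by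
    exact det_rowdiff _ (fun i => by simp [Real.rpow_zero])
  rw [h2]
  -- FTC per entry
  have h3 : ∀ (i j : Fin N),
      u i.succ ^ (a j.succ - a 0) - u i.castSucc ^ (a j.succ - a 0)
        = (a j.succ - a 0) * ∫ x in Set.Icc (u i.castSucc) (u i.succ),
            x ^ (a j.succ - a 0 - 1) := by
    intro i j
    have hle : u i.castSucc ≤ u i.succ := (hu (Fin.castSucc_lt_succ (i := i))).le
    have hr : (-1 : ℝ) < a j.succ - a 0 - 1 := by
      have : a 0 < a j.succ := ha (Fin.succ_pos j)
      linarith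
    have := integral_rpow (Or.inl hr) (a := u i.castSucc) (b := u i.succ)
    rw [intervalIntegral.integral_of_le hle] at this
    rw [← integral_Icc_eq_integral_Ioc] at this
    rw [this]
    have hne : a j.succ - a 0 ≠ 0 := by
      have : a 0 < a j.succ := ha (Fin.succ_pos j)
      linarith
    rw [show a j.succ - a 0 - 1 + 1 = a j.succ - a 0 by ring, mul_div_cancel₀ _ hne]
  have h4 : Matrix.det (Matrix.of fun (i j : Fin N) =>
        u i.succ ^ (a j.succ - a 0) - u i.castSucc ^ (a j.succ - a 0))
      = Matrix.det (Matrix.of fun (i j : Fin N) =>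
          (a j.succ - a 0) * ∫ x in Set.Icc (u i.castSucc) (u i.succ),
            x ^ (a j.succ - a 0 - 1)) := by
    congr 1; ext i j; simp only [Matrix.of_apply]; exact h3 i j
  rw [h4]
  refine (Matrix.det_mul_row (fun j => a j.succ - a 0) (Matrix.of fun (i j : Fin N) =>
    ∫ x in Set.Icc (u i.castSucc) (u i.succ), x ^ (a j.succ - a 0 - 1))).trans ?_
  congr 1
  -- now the box integral
  have hint : ∀ (i j : Fin N), IntegrableOn (fun x : ℝ => x ^ (a j.succ - a 0 - 1))
      (Set.Icc (u i.castSucc) (u i.succ)) := by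
    intro i j
    apply ContinuousOn.integrableOn_Icc
    apply ContinuousOn.rpow_const continuousOn_id
    intro x hx
    exact Or.inl (ne_of_gt (lt_of_lt_of_le (hupos i.castSucc) hx.1))
  exact det_box_integral _ _ (fun x j => x ^ (a j.succ - a 0 - 1)) hint

lemma contOn_det_rpow {N : ℕ} (e : Fin N → ℝ) (S : Set (Fin N → ℝ))
    (hS : ∀ t ∈ S, ∀ i, 0 < t i) :
    ContinuousOn (fun t : Fin N → ℝ => Matrix.det (Matrix.of fun i j => t i ^ e j)) S := by
  simp_rw [Matrix.det_apply', Matrix.of_apply]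
  apply continuousOn_finset_sum
  intro σ _
  apply ContinuousOn.mul continuousOn_const
  apply continuousOn_finset_prod
  intro i _
  exact ((continuous_apply (σ i)).continuousOn).rpow_const
    (fun t ht => Or.inl (ne_of_gt (hS t ht (σ i))))

lemma det_rpow_pos : ∀ (N : ℕ) (u a : Fin N → ℝ), StrictMono u → (∀ i, 0 < u i) →
    StrictMono a → 0 < Matrix.det (Matrix.of fun i j => u i ^ a j) := by
  intro N
  induction N with
  | zero => intro u a _ _ _; simp [Matrix.det_isEmpty]
  | succ N ih =>
    intro u a hu hu0 ha
    rw [master_id u a hu (hu0 0) ha]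
    have box_mono : ∀ t ∈ Set.univ.pi (fun i : Fin N => Set.Icc (u i.castSucc) (u i.succ)),
        ∀ i j : Fin N, i < j → t i ≤ t j := by
      intro t ht i j hij
      have h1 : t i ≤ u i.succ := (ht i (Set.mem_univ i)).2
      have h2 : u j.castSucc ≤ t j := (ht j (Set.mem_univ j)).1
      have h3 : u i.succ ≤ u j.castSucc := hu.monotone (Fin.succ_le_castSucc_iff.2 hij)
      linarith
    have hnonneg : ∀ t ∈ Set.univ.pi (fun i : Fin N => Set.Icc (u i.castSucc) (u i.succ)),
        0 ≤ Matrix.det (Matrix.of fun (i j : Fin N) => t i ^ (a j.succ - a 0 - 1)) := by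
      intro t ht
      by_cases hsm : StrictMono t
      · refine le_of_lt (ih t _ hsm (fun i => lt_of_lt_of_le (hu0 _) (ht i (Set.mem_univ i)).1)
          (fun j k hjk => by
            have : a j.succ < a k.succ := ha (Fin.succ_lt_succ_iff.2 hjk)
            linarith))
      · have : ∃ i j : Fin N, i < j ∧ t i = t j := by
          by_contra h
          push_neg at h
          exact hsm (fun i j hij => lt_of_le_of_ne (box_mono t ht i j hij) (h i j hij))
        obtain ⟨i, j, hij, htij⟩ := this
        rw [Matrix.det_zero_of_row_eq (ne_of_lt hij) (by
          funext k; simp [htij])]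
    have hbox : MeasurableSet (Set.univ.pi (fun i : Fin N => Set.Icc (u i.castSucc) (u i.succ))) :=
      MeasurableSet.univ_pi (fun i => measurableSet_Icc)
    have hintOn : MeasureTheory.IntegrableOn
        (fun t : Fin N → ℝ => Matrix.det (Matrix.of fun (i j : Fin N) => t i ^ (a j.succ - a 0 - 1)))
        (Set.univ.pi (fun i : Fin N => Set.Icc (u i.castSucc) (u i.succ))) := by
      apply ContinuousOn.integrableOn_compact (isCompact_univ_pi (fun i => isCompact_Icc))
      exact contOn_det_rpow _ _ (fun t ht i => lt_of_lt_of_le (hu0 _) (ht i (Set.mem_univ i)).1)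
    have hintpos : 0 < ∫ t in Set.univ.pi (fun i : Fin N => Set.Icc (u i.castSucc) (u i.succ)),
        Matrix.det (Matrix.of fun (i j : Fin N) => t i ^ (a j.succ - a 0 - 1)) := by
      rw [MeasureTheory.setIntegral_pos_iff_support_of_nonneg_ae
        ((MeasureTheory.ae_restrict_iff' hbox).2 (MeasureTheory.ae_of_all _ hnonneg)) hintOn]
      have hsub : Set.univ.pi (fun i : Fin N => Set.Ioo (u i.castSucc) (u i.succ)) ⊆
          (Function.support fun t : Fin N → ℝ =>
            Matrix.det (Matrix.of fun (i j : Fin N) => t i ^ (a j.succ - a 0 - 1))) ∩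
          Set.univ.pi (fun i : Fin N => Set.Icc (u i.castSucc) (u i.succ)) := by
        intro t ht
        constructor
        · have hsm : StrictMono t := by
            intro i j hij
            have h1 : t i < u i.succ := (ht i (Set.mem_univ i)).2
            have h2 : u j.castSucc < t j := (ht j (Set.mem_univ j)).1
            have h3 : u i.succ ≤ u j.castSucc := hu.monotone (Fin.succ_le_castSucc_iff.2 hij)
            linarith
          exact ne_of_gt (ih t _ hsm
            (fun i => lt_of_lt_of_le (hu0 _) (le_of_lt (ht i (Set.mem_univ i)).1))
            (fun j k hjk => by
              have : a j.succ < a k.succ := ha (Fin.succ_lt_succ_iff.2 hjk)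
              linarith))
        · exact fun i _ => Set.Ioo_subset_Icc_self (ht i (Set.mem_univ i))
      refine lt_of_lt_of_le ?_ (MeasureTheory.measure_mono hsub)
      rw [MeasureTheory.volume_pi_pi]
      rw [pos_iff_ne_zero, Finset.prod_ne_zero_iff]
      intro i _
      simp only [Real.volume_Ioo]
      exact ne_of_gt (ENNReal.ofReal_pos.2 (sub_pos.2 (hu (Fin.castSucc_lt_succ (i := i)))))
    have h1 : 0 < ∏ i, u i ^ a 0 := Finset.prod_pos (fun i _ => Real.rpow_pos_of_pos (hu0 i) _)
    have h2 : 0 < ∏ j : Fin N, (a j.succ - a 0) :=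
      Finset.prod_pos (fun j _ => sub_pos.2 (ha (Fin.succ_pos j)))
    positivity

lemma Vdm_shift (N : ℕ) (c : Fin N → ℝ) (s : ℝ) : Vdm N (fun j => c j - s) = Vdm N c := by
  unfold Vdm
  apply Finset.prod_congr rfl
  intro p _
  ring

lemma master_W {N : ℕ} (u : Fin (N+1) → ℝ) (a : Fin (N+1) → ℝ)
    (hu : StrictMono u) (hu0 : 0 < u 0) (ha : StrictMono a) :
    Matrix.det (Matrix.of fun i j => u i ^ a j) / Vdm (N+1) a
      = (∏ i, u i ^ a 0) *
        ∫ t in Set.univ.pi (fun i : Fin N => Set.Icc (u i.castSucc) (u i.succ)),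
          Matrix.det (Matrix.of fun (i j : Fin N) => (t i) ^ (a j.succ - a 0 - 1))
            / Vdm N (fun j => a j.succ - a 0 - 1) := by
  have hV' : Vdm N (fun j => a j.succ - a 0 - 1) = Vdm N (fun j => a j.succ) := by
    have := Vdm_shift N (fun j => a j.succ) (a 0 + 1)
    rw [← this]
    apply congrArg
    funext j
    ring
  rw [master_id u a hu hu0 ha, Vdm_succ N a]
  rw [MeasureTheory.integral_div]
  have h2 : (0:ℝ) < ∏ j : Fin N, (a j.succ - a 0) :=
    Finset.prod_pos (fun j _ => sub_pos.2 (ha (Fin.succ_pos j)))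
  have hV : (0:ℝ) < Vdm N (fun j => a j.succ) :=
    Vdm_pos (fun i j hij => ha (Fin.succ_lt_succ_iff.2 hij))
  rw [hV']
  field_simp

lemma prefactor_mono {N : ℕ} (u : Fin (N+1) → ℝ) (t : Fin N → ℝ) (a0 b0 : ℝ)
    (hu0 : ∀ i, 0 < u i) (hu1 : ∀ i, u i ≤ 1) (ht : ∀ i, u i.castSucc ≤ t i)
    (ht0 : ∀ i, 0 < t i) (hab : a0 ≤ b0) :
    (∏ i, u i ^ b0) * (∏ i : Fin N, t i ^ (-(b0+1)))
      ≤ (∏ i, u i ^ a0) * (∏ i : Fin N, t i ^ (-(a0+1))) := by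
  have key1 : ∀ i, u i ^ b0 = u i ^ a0 * u i ^ (b0 - a0) := fun i => by
    rw [← Real.rpow_add (hu0 i)]; ring_nf
  have key2 : ∀ i : Fin N, t i ^ (-(b0+1)) = t i ^ (-(a0+1)) * t i ^ (-(b0 - a0)) := fun i => by
    rw [← Real.rpow_add (ht0 i)]; ring_nf
  simp_rw [key1, key2, Finset.prod_mul_distrib]
  have hbr : (∏ i, u i ^ (b0 - a0)) * (∏ i : Fin N, t i ^ (-(b0 - a0)))
      = (∏ i : Fin N, (u i.castSucc / t i) ^ (b0 - a0)) * (u (Fin.last N)) ^ (b0 - a0) := by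
    rw [Fin.prod_univ_castSucc (f := fun i => u i ^ (b0 - a0))]
    rw [mul_right_comm, ← Finset.prod_mul_distrib]
    congr 1
    apply Finset.prod_congr rfl
    intro i _
    rw [Real.div_rpow (le_of_lt (hu0 _)) (le_of_lt (ht0 _)), Real.rpow_neg (le_of_lt (ht0 i)),
      div_eq_mul_inv]
  have hbr_le : (∏ i, u i ^ (b0 - a0)) * (∏ i : Fin N, t i ^ (-(b0 - a0))) ≤ 1 := by
    rw [hbr]
    have h1 : ∀ i : Fin N, (u i.castSucc / t i) ^ (b0 - a0) ≤ 1 := fun i =>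
      Real.rpow_le_one (le_of_lt (div_pos (hu0 _) (ht0 _)))
        (div_le_one_of_le₀ (ht i) (le_of_lt (ht0 i))) (by linarith)
    have h2 : (u (Fin.last N)) ^ (b0 - a0) ≤ 1 :=
      Real.rpow_le_one (le_of_lt (hu0 _)) (hu1 _) (by linarith)
    calc (∏ i : Fin N, (u i.castSucc / t i) ^ (b0 - a0)) * (u (Fin.last N)) ^ (b0 - a0)
        ≤ 1 * 1 := by
          apply mul_le_mul _ h2 (Real.rpow_nonneg (le_of_lt (hu0 _)) _)
          · exact zero_le_one
          · apply Finset.prod_le_one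
            · intro i _
              exact Real.rpow_nonneg (le_of_lt (div_pos (hu0 _) (ht0 _))) _
            · intro i _
              exact h1 i
      _ = 1 := by ring
  calc (∏ i, u i ^ a0) * (∏ i, u i ^ (b0 - a0)) *
        ((∏ i : Fin N, t i ^ (-(a0+1))) * ∏ i : Fin N, t i ^ (-(b0 - a0)))
      = ((∏ i, u i ^ a0) * (∏ i : Fin N, t i ^ (-(a0+1)))) *
        ((∏ i, u i ^ (b0 - a0)) * (∏ i : Fin N, t i ^ (-(b0 - a0)))) := by ring
    _ ≤ ((∏ i, u i ^ a0) * (∏ i : Fin N, t i ^ (-(a0+1)))) * 1 := by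
        apply mul_le_mul_of_nonneg_left hbr_le
        apply mul_nonneg
        · exact Finset.prod_nonneg fun i _ => Real.rpow_nonneg (le_of_lt (hu0 i)) _
        · exact Finset.prod_nonneg fun i _ => Real.rpow_nonneg (le_of_lt (ht0 i)) _
    _ = (∏ i, u i ^ a0) * (∏ i : Fin N, t i ^ (-(a0+1))) := by ring

lemma box_mono_le {N : ℕ} (u : Fin (N+1) → ℝ) (hu : StrictMono u) {t : Fin N → ℝ}
    (ht : t ∈ Set.univ.pi (fun i : Fin N => Set.Icc (u i.castSucc) (u i.succ)))
    {i j : Fin N} (hij : i < j) : t i ≤ t j := by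
  have h1 : t i ≤ u i.succ := (ht i (Set.mem_univ i)).2
  have h2 : u j.castSucc ≤ t j := (ht j (Set.mem_univ j)).1
  have h3 : u i.succ ≤ u j.castSucc := hu.monotone (Fin.succ_le_castSucc_iff.2 hij)
  linarith

lemma box_det_zero {N : ℕ} (u : Fin (N+1) → ℝ) (hu : StrictMono u) {t : Fin N → ℝ}
    (ht : t ∈ Set.univ.pi (fun i : Fin N => Set.Icc (u i.castSucc) (u i.succ)))
    (hsm : ¬ StrictMono t) (e : Fin N → ℝ) :
    Matrix.det (Matrix.of fun (i j : Fin N) => t i ^ e j) = 0 := by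
  have : ∃ i j : Fin N, i < j ∧ t i = t j := by
    by_contra h
    push_neg at h
    exact hsm (fun i j hij => lt_of_le_of_ne (box_mono_le u hu ht hij) (h i j hij))
  obtain ⟨i, j, hij, htij⟩ := this
  exact Matrix.det_zero_of_row_eq (ne_of_lt hij) (by funext k; simp [htij])

lemma det_rpow_ratio_mono : ∀ (N : ℕ) (u a b : Fin N → ℝ), StrictMono u → (∀ i, 0 < u i) →
    (∀ i, u i ≤ 1) → StrictMono a → StrictMono b → (∀ j, a j ≤ b j) →
    Matrix.det (Matrix.of fun i j => u i ^ b j) / Vdm N b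
      ≤ Matrix.det (Matrix.of fun i j => u i ^ a j) / Vdm N a := by
  intro N
  induction N with
  | zero => intro u a b _ _ _ _ _ _; simp [Vdm]
  | succ N ih =>
    intro u a b hu hu0 hu1 ha hb hab
    set c : Fin (N+1) → ℝ := fun i => if i = 0 then a 0 else b i with hcdef
    have hc0 : c 0 = a 0 := if_pos rfl
    have hcs : ∀ j : Fin N, c j.succ = b j.succ := fun j => if_neg (Fin.succ_ne_zero j)
    have hc : StrictMono c := by
      intro i j hij
      rcases Fin.eq_zero_or_eq_succ j with rfl | ⟨j', rfl⟩
      · exact absurd hij (Fin.not_lt_zero i)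
      · rw [hcs j']
        rcases Fin.eq_zero_or_eq_succ i with rfl | ⟨i', rfl⟩
        · rw [hc0]
          exact lt_of_le_of_lt (hab 0) (hb (Fin.succ_pos j'))
        · rw [hcs i']
          exact hb hij
    have hbox : MeasurableSet (Set.univ.pi (fun i : Fin N => Set.Icc (u i.castSucc) (u i.succ))) :=
      MeasurableSet.univ_pi (fun i => measurableSet_Icc)
    have hcompact : IsCompact (Set.univ.pi (fun i : Fin N => Set.Icc (u i.castSucc) (u i.succ))) :=
      isCompact_univ_pi (fun i => isCompact_Icc)
    have htpos : ∀ t ∈ Set.univ.pi (fun i : Fin N => Set.Icc (u i.castSucc) (u i.succ)),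
        ∀ i : Fin N, 0 < t i :=
      fun t ht i => lt_of_lt_of_le (hu0 _) (ht i (Set.mem_univ i)).1
    have htone : ∀ t ∈ Set.univ.pi (fun i : Fin N => Set.Icc (u i.castSucc) (u i.succ)),
        ∀ i : Fin N, t i ≤ 1 :=
      fun t ht i => le_trans (ht i (Set.mem_univ i)).2 (hu1 _)
    -- strict monotone inner exponent tuples
    have hb' : StrictMono (fun j : Fin N => b j.succ) :=
      fun i j hij => hb (Fin.succ_lt_succ_iff.2 hij)
    have ha' : StrictMono (fun j : Fin N => a j.succ) :=
      fun i j hij => ha (Fin.succ_lt_succ_iff.2 hij)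
    -- Stage 2 : W u c ≤ W u a
    have stage2 : Matrix.det (Matrix.of fun i j => u i ^ c j) / Vdm (N+1) c
        ≤ Matrix.det (Matrix.of fun i j => u i ^ a j) / Vdm (N+1) a := by
      rw [master_W u a hu (hu0 0) ha, master_W u c hu (hu0 0) hc]
      simp only [hc0, hcs]
      apply mul_le_mul_of_nonneg_left _
        (Finset.prod_nonneg fun i _ => Real.rpow_nonneg (le_of_lt (hu0 i)) _)
      apply MeasureTheory.setIntegral_mono_on
      · apply ContinuousOn.integrableOn_compact hcompact
        exact (contOn_det_rpow _ _ (fun t ht i => htpos t ht i)).div_const _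
      · apply ContinuousOn.integrableOn_compact hcompact
        exact (contOn_det_rpow _ _ (fun t ht i => htpos t ht i)).div_const _
      · exact hbox
      · intro t ht
        by_cases hsm : StrictMono t
        · exact ih t (fun j => a j.succ - a 0 - 1) (fun j => b j.succ - a 0 - 1)
            hsm (htpos t ht) (htone t ht)
            (fun i j hij => by have := ha' hij; simp only at this ⊢; linarith)
            (fun i j hij => by have := hb' hij; simp only at this ⊢; linarith)
            (fun j => by have := hab j.succ; linarith)
        · rw [box_det_zero u hu ht hsm, box_det_zero u hu ht hsm]
          simp
    -- Stage 1 : W u b ≤ W u c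
    have stage1 : Matrix.det (Matrix.of fun i j => u i ^ b j) / Vdm (N+1) b
        ≤ Matrix.det (Matrix.of fun i j => u i ^ c j) / Vdm (N+1) c := by
      rw [master_W u b hu (hu0 0) hb, master_W u c hu (hu0 0) hc]
      simp only [hc0, hcs]
      -- rewrite both integrands in factored form
      have hVN : Vdm N (fun j => b j.succ) > 0 := Vdm_pos hb'
      have hrw : ∀ (x0 : ℝ) (t : Fin N → ℝ), (∀ i, 0 < t i) →
          Matrix.det (Matrix.of fun (i j : Fin N) => t i ^ (b j.succ - x0 - 1))
            / Vdm N (fun j => b j.succ - x0 - 1)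
          = (∏ i : Fin N, t i ^ (-(x0+1))) *
            (Matrix.det (Matrix.of fun (i j : Fin N) => t i ^ (b j.succ))
              / Vdm N (fun j => b j.succ)) := by
        intro x0 t ht0
        have hdet : Matrix.det (Matrix.of fun (i j : Fin N) => t i ^ (b j.succ - x0 - 1))
            = (∏ i : Fin N, t i ^ (-(x0+1))) *
              Matrix.det (Matrix.of fun (i j : Fin N) => t i ^ (b j.succ)) := by
          rw [← Matrix.det_mul_column (fun i => t i ^ (-(x0+1)))]
          congr 1
          ext i j
          simp only [Matrix.of_apply]
          rw [← Real.rpow_add (ht0 i)]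
          ring_nf
        have hV : Vdm N (fun j => b j.succ - x0 - 1) = Vdm N (fun j => b j.succ) := by
          have := Vdm_shift N (fun j => b j.succ) (x0 + 1)
          rw [← this]
          apply congrArg
          funext j
          ring
        rw [hdet, hV, mul_div_assoc]
      rw [← MeasureTheory.integral_const_mul, ← MeasureTheory.integral_const_mul]
      apply MeasureTheory.setIntegral_mono_on
      · apply ContinuousOn.integrableOn_compact hcompact
        apply ContinuousOn.mul continuousOn_const
        exact (contOn_det_rpow _ _ (fun t ht i => htpos t ht i)).div_const _
      · apply ContinuousOn.integrableOn_compact hcompact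
        apply ContinuousOn.mul continuousOn_const
        exact (contOn_det_rpow _ _ (fun t ht i => htpos t ht i)).div_const _
      · exact hbox
      · intro t ht
        rw [hrw (b 0) t (htpos t ht), hrw (a 0) t (htpos t ht)]
        have hK : 0 ≤ Matrix.det (Matrix.of fun (i j : Fin N) => t i ^ (b j.succ))
            / Vdm N (fun j => b j.succ) := by
          by_cases hsm : StrictMono t
          · exact le_of_lt (div_pos (det_rpow_pos N t _ hsm (htpos t ht) hb') hVN)
          · rw [box_det_zero u hu ht hsm]; simp
        have hpre := prefactor_mono u t (a 0) (b 0) hu0 hu1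
          (fun i => (ht i (Set.mem_univ i)).1) (htpos t ht) (hab 0)
        calc (∏ i, u i ^ b 0) * ((∏ i : Fin N, t i ^ (-(b 0+1))) *
              (Matrix.det (Matrix.of fun (i j : Fin N) => t i ^ (b j.succ))
                / Vdm N (fun j => b j.succ)))
            = ((∏ i, u i ^ b 0) * (∏ i : Fin N, t i ^ (-(b 0+1)))) *
              (Matrix.det (Matrix.of fun (i j : Fin N) => t i ^ (b j.succ))
                / Vdm N (fun j => b j.succ)) := by ring
          _ ≤ ((∏ i, u i ^ a 0) * (∏ i : Fin N, t i ^ (-(a 0+1)))) *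
              (Matrix.det (Matrix.of fun (i j : Fin N) => t i ^ (b j.succ))
                / Vdm N (fun j => b j.succ)) := mul_le_mul_of_nonneg_right hpre hK
          _ = (∏ i, u i ^ a 0) * ((∏ i : Fin N, t i ^ (-(a 0+1))) *
              (Matrix.det (Matrix.of fun (i j : Fin N) => t i ^ (b j.succ))
                / Vdm N (fun j => b j.succ))) := by ring
    exact le_trans stage1 stage2

theorem stmt11 (N : ℕ) (hN : 1 ≤ N) (ρ : ℝ) (hρ : 0 < ρ) (m n : Fin N → ℝ)
    (hm : StrictMono m) (hn : StrictMono n) (hle : ∀ j, m j ≤ n j)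
    (u : Fin N → ℝ) (hu : ∀ i, 0 < u i ∧ u i ≤ Real.sqrt ρ)
    (huinj : Function.Injective u) :
    Matrix.det (Matrix.of fun i j => u i ^ n j) /
        Matrix.det (Matrix.of fun i j => u i ^ m j) ≤
      ρ ^ (((∑ j, n j) - ∑ j, m j) / 2) * Vdm N n / Vdm N m := by
  classical
  set σ := Tuple.sort u with hσ
  set v : Fin N → ℝ := u ∘ σ with hvdef
  have hv : StrictMono v :=
    (Tuple.monotone_sort u).strictMono_of_injective (huinj.comp σ.injective)
  have hv0 : ∀ i, 0 < v i := fun i => (hu (σ i)).1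
  have hv1 : ∀ i, v i ≤ Real.sqrt ρ := fun i => (hu (σ i)).2
  have hρ2 : 0 < Real.sqrt ρ := Real.sqrt_pos.2 hρ
  set w : Fin N → ℝ := fun i => v i / Real.sqrt ρ with hwdef
  have hw : StrictMono w := fun i j hij => (div_lt_div_iff_of_pos_right hρ2).2 (hv hij)
  have hw0 : ∀ i, 0 < w i := fun i => div_pos (hv0 i) hρ2
  have hw1 : ∀ i, w i ≤ 1 := fun i => (div_le_one hρ2).2 (hv1 i)
  have key := det_rpow_ratio_mono N w m n hw hw0 hw1 hm hn hle
  -- determinant relations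
  have hvdet : ∀ e : Fin N → ℝ, Matrix.det (Matrix.of fun i j => v i ^ e j)
      = (Equiv.Perm.sign σ : ℝ) * Matrix.det (Matrix.of fun i j => u i ^ e j) := by
    intro e
    have : (Matrix.of fun i j => v i ^ e j)
        = (Matrix.of fun i j => u i ^ e j).submatrix σ id := by
      ext i j; rfl
    rw [this, Matrix.det_permute]
  have hwdet : ∀ e : Fin N → ℝ, Matrix.det (Matrix.of fun i j => v i ^ e j)
      = Real.sqrt ρ ^ (∑ j, e j) * Matrix.det (Matrix.of fun i j => w i ^ e j) := by
    intro e
    have hventry : ∀ i j, v i ^ e j = (Real.sqrt ρ ^ e j) * (w i ^ e j) := by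
      intro i j
      rw [← Real.mul_rpow (le_of_lt hρ2) (le_of_lt (hw0 i))]
      congr 1
      rw [mul_comm]
      exact (div_mul_cancel₀ (v i) (ne_of_gt hρ2)).symm
    have : (Matrix.of fun i j => v i ^ e j)
        = (Matrix.of fun i j => (Real.sqrt ρ ^ e j) * (w i ^ e j)) := by
      ext i j; exact hventry i j
    rw [this]
    refine (Matrix.det_mul_row (fun j => Real.sqrt ρ ^ e j) (Matrix.of fun i j => w i ^ e j)).trans ?_
    rw [Real.rpow_sum_of_pos hρ2]
  have dwm : 0 < Matrix.det (Matrix.of fun i j => w i ^ m j) := det_rpow_pos N w m hw hw0 hm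
  have dwn : 0 < Matrix.det (Matrix.of fun i j => w i ^ n j) := det_rpow_pos N w n hw hw0 hn
  have Vm : 0 < Vdm N m := Vdm_pos hm
  have Vn : 0 < Vdm N n := Vdm_pos hn
  -- reduce goal to sorted variables
  have hsgn : (Equiv.Perm.sign σ : ℝ) ≠ 0 := by
    rcases Int.units_eq_one_or (Equiv.Perm.sign σ) with h | h <;> rw [h] <;> norm_num
  have hratio : Matrix.det (Matrix.of fun i j => u i ^ n j) /
      Matrix.det (Matrix.of fun i j => u i ^ m j)
      = Matrix.det (Matrix.of fun i j => v i ^ n j) /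
        Matrix.det (Matrix.of fun i j => v i ^ m j) := by
    rw [hvdet n, hvdet m, mul_div_mul_left _ _ hsgn]
  rw [hratio, hwdet n, hwdet m]
  -- core inequality in ratio form
  have hcore : Matrix.det (Matrix.of fun i j => w i ^ n j) /
      Matrix.det (Matrix.of fun i j => w i ^ m j) ≤ Vdm N n / Vdm N m := by
    rw [div_le_div_iff₀ dwm Vm]
    rw [div_le_div_iff₀ Vn Vm] at key
    linarith
  have hpow : Real.sqrt ρ ^ (∑ j, n j) / Real.sqrt ρ ^ (∑ j, m j)
      = ρ ^ (((∑ j, n j) - ∑ j, m j) / 2) := by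
    rw [← Real.rpow_sub hρ2, Real.sqrt_eq_rpow, ← Real.rpow_mul (le_of_lt hρ)]
    congr 1
    ring
  calc Real.sqrt ρ ^ (∑ j, n j) * Matrix.det (Matrix.of fun i j => w i ^ n j) /
        (Real.sqrt ρ ^ (∑ j, m j) * Matrix.det (Matrix.of fun i j => w i ^ m j))
      = (Real.sqrt ρ ^ (∑ j, n j) / Real.sqrt ρ ^ (∑ j, m j)) *
        (Matrix.det (Matrix.of fun i j => w i ^ n j) /
          Matrix.det (Matrix.of fun i j => w i ^ m j)) := by
        rw [div_mul_div_comm]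
    _ ≤ (Real.sqrt ρ ^ (∑ j, n j) / Real.sqrt ρ ^ (∑ j, m j)) * (Vdm N n / Vdm N m) := by
        apply mul_le_mul_of_nonneg_left hcore
        positivity
    _ = ρ ^ (((∑ j, n j) - ∑ j, m j) / 2) * Vdm N n / Vdm N m := by
        rw [hpow, mul_div_assoc]
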